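/- Let μ be a probability measure on ℝ giving full mass to [0,∞), let λ > 0, and let σ ∈ ℝ be such that the function x ↦ e^{−σx} is μ-integrable and σ = λ·(1 − ∫ e^{−σx} dμ(x)). If t ∈ ℝ is such that the complex equation σ + i·t = λ·(1 − ∫ e^{−(σ+it)x} dμ(x)) holds, then t = 0. (That is, a real zero σ of the denominator s − λ(1 − E[e^{−sD}]) of the Pollaczek–Khintchine transform is the only zero on the vertical line Re s = σ.) -/
import Mathlib


open MeasureTheory

/-- A real zero `σ` of the denominator `s - λ(1 - E[e^{-sD}])` of the Pollaczek–Khintchine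
transform is the only zero on the vertical line `Re s = σ`. -/
theorem pk_denominator_zero_isolated_on_vertical_line
    (μ : Measure ℝ) [IsProbabilityMeasure μ] (hsupp : μ {x | x < 0} = 0)
    (lam : ℝ) (hlam : 0 < lam) (σ : ℝ)
    (hint : Integrable (fun x => Real.exp (-σ * x)) μ)
    (hσ : σ = lam * (1 - ∫ x, Real.exp (-σ * x) ∂μ))
    (t : ℝ)
    (ht : (σ : ℂ) + t * Complex.I =
      (lam : ℂ) * (1 - ∫ x, Complex.exp (-((σ : ℂ) + t * Complex.I) * x) ∂μ)) :
    t = 0 := by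
  set f : ℝ → ℂ := fun x => Complex.exp (-((σ : ℂ) + t * Complex.I) * x) with hf
  have hre : ∀ x : ℝ, (f x).re = Real.exp (-σ * x) * Real.cos (t * x) := by
    intro x
    simp [hf, Complex.exp_re, Complex.add_re, Complex.add_im, Complex.cos_neg]
  have him : ∀ x : ℝ, (f x).im = -(Real.exp (-σ * x) * Real.sin (t * x)) := by
    intro x
    simp [hf, Complex.exp_im]
  have hfint : Integrable f μ := by
    refine hint.mono' ?_ ?_
    · exact ((continuous_const.mul Complex.continuous_ofReal).cexp).aestronglyMeasurable
    · filter_upwards with x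
      simp [hf, Complex.norm_exp]
  have hcosint : Integrable (fun x => Real.exp (-σ * x) * Real.cos (t * x)) μ := by
    have := hfint.re
    simpa [hre] using this
  have hsinint : Integrable (fun x => Real.exp (-σ * x) * Real.sin (t * x)) μ := by
    have h1 : Integrable (fun x => -(Real.exp (-σ * x) * Real.sin (t * x))) μ := by
      have := hfint.im
      simpa [him] using this
    exact h1.neg.congr (Filter.Eventually.of_forall fun x => by simp)
  have hI : ∫ x, f x ∂μ =
      ((∫ x, Real.exp (-σ * x) * Real.cos (t * x) ∂μ : ℝ) : ℂ)
        + ((∫ x, -(Real.exp (-σ * x) * Real.sin (t * x)) ∂μ : ℝ) : ℂ) * Complex.I := by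
    rw [← integral_re_add_im hfint]
    norm_num [hre, him]
  rw [hI] at ht
  have hRe := congrArg Complex.re ht
  have hIm := congrArg Complex.im ht
  simp [Complex.add_re, Complex.add_im, Complex.mul_re, Complex.mul_im,
    integral_neg] at hRe hIm
  simp only [← neg_mul] at hRe hIm
  -- hRe : σ = lam * (1 - ∫ exp(-σx) cos(tx))
  have hcoseq : ∫ x, Real.exp (-σ * x) * Real.cos (t * x) ∂μ
      = ∫ x, Real.exp (-σ * x) ∂μ := by
    have h1 : lam * (1 - ∫ x, Real.exp (-σ * x) * Real.cos (t * x) ∂μ)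
        = lam * (1 - ∫ x, Real.exp (-σ * x) ∂μ) := by
      rw [← hσ]; linarith [hRe]
    have h2 := mul_left_cancel₀ (ne_of_gt hlam) h1
    linarith
  have hzero : ∫ x, Real.exp (-σ * x) * (1 - Real.cos (t * x)) ∂μ = 0 := by
    have : ∀ x, Real.exp (-σ * x) * (1 - Real.cos (t * x))
        = Real.exp (-σ * x) - Real.exp (-σ * x) * Real.cos (t * x) := by
      intro x; ring
    simp only [this]
    rw [integral_sub hint hcosint, hcoseq, sub_self]
  have hintdiff : Integrable (fun x => Real.exp (-σ * x) * (1 - Real.cos (t * x))) μ := by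
    have : ∀ x, Real.exp (-σ * x) * (1 - Real.cos (t * x))
        = Real.exp (-σ * x) - Real.exp (-σ * x) * Real.cos (t * x) := by
      intro x; ring
    simp only [this]
    exact hint.sub hcosint
  have hnonneg : 0 ≤ᵐ[μ] fun x => Real.exp (-σ * x) * (1 - Real.cos (t * x)) := by
    filter_upwards with x
    exact mul_nonneg (Real.exp_nonneg _) (by linarith [Real.cos_le_one (t * x)])
  have hae : (fun x => Real.exp (-σ * x) * (1 - Real.cos (t * x))) =ᵐ[μ] 0 :=
    (integral_eq_zero_iff_of_nonneg_ae hnonneg hintdiff).mp hzero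
  have hcos1 : ∀ᵐ x ∂μ, Real.cos (t * x) = 1 := by
    filter_upwards [hae] with x hx
    have hexp : Real.exp (-σ * x) ≠ 0 := Real.exp_ne_zero _
    have : (1 - Real.cos (t * x)) = 0 := by
      rcases mul_eq_zero.mp hx with h | h
      · exact absurd h hexp
      · exact h
    linarith
  have hsin0 : ∀ᵐ x ∂μ, Real.sin (t * x) = 0 := by
    filter_upwards [hcos1] with x hx
    have := Real.sin_sq_add_cos_sq (t * x)
    nlinarith [Real.sin_sq_add_cos_sq (t * x)]
  have hsineq : ∫ x, Real.exp (-σ * x) * Real.sin (t * x) ∂μ = 0 := by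
    apply integral_eq_zero_of_ae
    filter_upwards [hsin0] with x hx
    simp [hx]
  rw [hsineq] at hIm
  simpa using hIm
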